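/- If M ≥ 3 and 0 < φₘ < 0.431, then ψₘ > sin φₘ / α₀ and φₘ > sin φₘ / α₁, where ψₘ = arccos(2 cos φₘ / M), α₀ = cos φₘ / 2, α₁ = 3 cos φₘ / 2. -/

import Mathlib

open Real

private lemma sum_re7 (x : ℝ) :
    (∑ i ∈ Finset.range 7, (x * Complex.I) ^ i / i.factorial).re
      = 1 - x ^ 2 / 2 + x ^ 4 / 24 - x ^ 6 / 720 := by
  simp [Finset.sum_range_succ, Nat.factorial, pow_succ, Complex.div_re, Complex.normSq,
    Complex.add_re]
  ring

private lemma cos_ge_taylor6 {x : ℝ} (hx : |x| ≤ 1) :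
    1 - x ^ 2 / 2 + x ^ 4 / 24 - x ^ 6 / 720 - |x| ^ 7 / 4410 ≤ Real.cos x := by
  have hz : ‖(x : ℂ) * Complex.I‖ ≤ 1 := by simpa using hx
  have h := Complex.exp_bound hz (by norm_num : 0 < 7)
  have hre : |(Complex.exp (x * Complex.I) - ∑ i ∈ Finset.range 7,
      (x * Complex.I) ^ i / i.factorial).re| ≤ |x| ^ 7 / 4410 := by
    refine le_trans (Complex.abs_re_le_norm _) (le_trans h (le_of_eq ?_))
    simp [Nat.factorial]
    ring
  rw [Complex.sub_re, Complex.exp_ofReal_mul_I_re, sum_re7] at hre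
  have := abs_le.1 hre
  linarith [this.1]

private lemma poly_key {s : ℝ} (hs0 : 0 ≤ s) (hs : s ≤ 2115 / 10000) :
    4 < 9 * (1 - 2*s + (2/3)*s^2 - (76/735)*s^3)^2 * (1 + s) := by
  nlinarith [mul_nonneg hs0 hs0, mul_nonneg (mul_nonneg hs0 hs0) hs0,
    mul_nonneg (sub_nonneg.2 hs) hs0, mul_nonneg (mul_nonneg (sub_nonneg.2 hs) hs0) hs0,
    mul_nonneg (mul_nonneg (sub_nonneg.2 hs) (sub_nonneg.2 hs)) hs0,
    sq_nonneg (s - 2115/10000), mul_nonneg (mul_nonneg (mul_nonneg (sub_nonneg.2 hs) hs0) hs0) hs0]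

private lemma cos_lb_poly {x : ℝ} (h0 : 0 < x) (h1 : x < 0.431) :
    (90853 : ℝ) / 100000 ≤ 1 - x ^ 2 / 2 + x ^ 4 / 24 - x ^ 6 / 720 - x ^ 7 / 4410 := by
  nlinarith [sq_nonneg x, sq_nonneg (x - 0.431), pow_pos h0 3, pow_pos h0 5, pow_pos h0 7,
    mul_nonneg (sub_nonneg.2 h1.le) (sq_nonneg x),
    mul_nonneg (mul_nonneg (sub_nonneg.2 h1.le) (sq_nonneg x)) (sq_nonneg x),
    mul_nonneg (sub_nonneg.2 h1.le) (pow_nonneg h0.le 4),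
    mul_nonneg (sub_nonneg.2 h1.le) (pow_nonneg h0.le 6)]

set_option maxHeartbeats 2000000 in
/-- If `M ≥ 3` and `0 < φₘ < 0.431`, then `ψₘ > sin φₘ / α₀` and
`φₘ > sin φₘ / α₁`, where `ψₘ = arccos (2 cos φₘ / M)`, `α₀ = cos φₘ / 2`,
`α₁ = 3 cos φₘ / 2`. -/
theorem tracking_angle_conditions
    (M φₘ : ℝ) (hM : 3 ≤ M) (hφ : φₘ ∈ Set.Ioo (0:ℝ) 0.431)
    (ψₘ α₀ α₁ : ℝ)
    (hψₘ : ψₘ = Real.arccos (2 * Real.cos φₘ / M))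
    (hα₀ : α₀ = Real.cos φₘ / 2)
    (hα₁ : α₁ = 3 * Real.cos φₘ / 2) :
    ψₘ > Real.sin φₘ / α₀ ∧ φₘ > Real.sin φₘ / α₁ := by
  obtain ⟨hφ0, hφ1⟩ := hφ
  have hφ1' : φₘ < 0.431 := hφ1
  have hpi := Real.pi_gt_three
  have hc0 : 0 < Real.cos φₘ := by
    apply Real.cos_pos_of_mem_Ioo
    constructor <;> [linarith; linarith]
  have hs0 : 0 < Real.sin φₘ := Real.sin_pos_of_pos_of_lt_pi hφ0 (by linarith)
  -- lower bound on cos φₘ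
  have hcge : (90853 : ℝ) / 100000 ≤ Real.cos φₘ := by
    have h1 := cos_ge_taylor6 (x := φₘ) (by rw [abs_of_pos hφ0]; linarith)
    rw [abs_of_pos hφ0] at h1
    linarith [cos_lb_poly hφ0 hφ1']
  set t := Real.sin φₘ / Real.cos φₘ with ht_def
  have ht0 : 0 < t := div_pos hs0 hc0
  have hpyth : Real.sin φₘ ^ 2 + Real.cos φₘ ^ 2 = 1 := Real.sin_sq_add_cos_sq φₘ
  have h1t : Real.cos φₘ ^ 2 * (1 + t ^ 2) = 1 := by
    rw [ht_def]
    field_simp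
    linarith [hpyth]
  have hc1 : Real.cos φₘ ≤ 1 := Real.cos_le_one φₘ
  have hsub : t ^ 2 ≤ 2115 / 10000 := by
    nlinarith [hcge, h1t, sq_nonneg t, hc0]
  have h2t1 : 2 * t ≤ 1 := by nlinarith [hsub, ht0]
  -- lower bound on cos (2t)
  have hcos2t : 1 - 2*t^2 + (2/3)*(t^2)^2 - (76/735)*(t^2)^3 ≤ Real.cos (2*t) := by
    have h1 := cos_ge_taylor6 (x := 2*t) (by rw [abs_of_pos (by linarith)]; linarith)
    rw [abs_of_pos (by linarith : (0:ℝ) < 2*t)] at h1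
    have h7 : (2*t) ^ 7 ≤ (2*t) ^ 6 := by
      calc (2*t) ^ 7 = (2*t) ^ 6 * (2*t) := by ring
        _ ≤ (2*t) ^ 6 * 1 := by
            apply mul_le_mul_of_nonneg_left h2t1 (by positivity)
        _ = (2*t) ^ 6 := mul_one _
    nlinarith [h1, h7]
  have hBpos : 0 < 1 - 2*t^2 + (2/3)*(t^2)^2 - (76/735)*(t^2)^3 := by
    nlinarith [sq_nonneg t, hsub]
  have hc2t0 : 0 < Real.cos (2*t) := lt_of_lt_of_le hBpos hcos2t
  -- the key squared inequality
  have hkey : 4 < 9 * Real.cos (2*t) ^ 2 * (1 + t ^ 2) := by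
    have hp := poly_key (sq_nonneg t) hsub
    have hsq : (1 - 2*t^2 + (2/3)*(t^2)^2 - (76/735)*(t^2)^3) ^ 2 ≤ Real.cos (2*t) ^ 2 :=
      pow_le_pow_left₀ hBpos.le hcos2t 2
    have hmul : (1 - 2*t^2 + (2/3)*(t^2)^2 - (76/735)*(t^2)^3) ^ 2 * (1 + t^2)
        ≤ Real.cos (2*t) ^ 2 * (1 + t^2) :=
      mul_le_mul_of_nonneg_right hsq (by positivity)
    have hpk : 4 < 9 * ((1 - 2*t^2 + (2/3)*(t^2)^2 - (76/735)*(t^2)^3) ^ 2 * (1 + t^2)) := by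
      have := poly_key (s := t^2) (sq_nonneg t) hsub
      calc (4:ℝ) < 9 * (1 - 2*t^2 + (2/3)*(t^2)^2 - (76/735)*(t^2)^3)^2 * (1 + t^2) := by
            convert this using 3 <;> ring
        _ = 9 * ((1 - 2*t^2 + (2/3)*(t^2)^2 - (76/735)*(t^2)^3) ^ 2 * (1 + t^2)) := by ring
    linarith [hmul, hpk]
  -- 3 cos (2t) > 2 cos φₘ
  have hmain : 2 * Real.cos φₘ < 3 * Real.cos (2*t) := by
    have hpos1t : (0:ℝ) < 1 + t^2 := by positivity
    have hlt : 4 * Real.cos φₘ ^ 2 * (1 + t^2) < 9 * Real.cos (2*t) ^ 2 * (1 + t^2) := by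
      calc 4 * Real.cos φₘ ^ 2 * (1 + t^2) = 4 * (Real.cos φₘ ^ 2 * (1 + t^2)) := by ring
        _ = 4 := by rw [h1t]; norm_num
        _ < 9 * Real.cos (2*t) ^ 2 * (1 + t ^ 2) := hkey
    have h9 : 4 * Real.cos φₘ ^ 2 < 9 * Real.cos (2*t) ^ 2 :=
      lt_of_mul_lt_mul_right hlt hpos1t.le
    have h9' : (2 * Real.cos φₘ) ^ 2 < (3 * Real.cos (2*t)) ^ 2 := by nlinarith [h9]
    exact lt_of_pow_lt_pow_left₀ 2 (by positivity) h9'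
  -- first inequality via arccos
  have hψ0 : 0 ≤ ψₘ := hψₘ ▸ Real.arccos_nonneg _
  have hcosψ : Real.cos ψₘ = 2 * Real.cos φₘ / M := by
    rw [hψₘ]
    apply Real.cos_arccos
    · have : 0 ≤ 2 * Real.cos φₘ / M := by positivity
      linarith
    · rw [div_le_one (by linarith : (0:ℝ) < M)]
      linarith
  have hdivM : 2 * Real.cos φₘ / M ≤ 2 * Real.cos φₘ / 3 := by
    apply div_le_div_of_nonneg_left (by linarith) (by norm_num) hM
  have hfirst : ψₘ > 2 * t := by
    by_contra hcon
    push_neg at hcon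
    have hmono := Real.cos_le_cos_of_nonneg_of_le_pi hψ0 (by linarith : 2*t ≤ π) hcon
    rw [hcosψ] at hmono
    have : 2 * Real.cos φₘ / 3 < Real.cos (2*t) := by linarith
    linarith
  constructor
  · have heq : Real.sin φₘ / α₀ = 2 * t := by
      rw [hα₀, ht_def]
      field_simp
    rw [heq]
    exact hfirst
  · rw [hα₁, gt_iff_lt, div_lt_iff₀ (by linarith : (0:ℝ) < 3 * Real.cos φₘ / 2)]
    have hsl : Real.sin φₘ < φₘ := Real.sin_lt hφ0
    have hcl : 1 - φₘ ^ 2 / 2 ≤ Real.cos φₘ := Real.one_sub_sq_div_two_le_cos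
    nlinarith [hsl, hcl, hφ0, hφ1']
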